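/- There exists a constant C₁ > 0 such that for every n ≥ 0, Σ_{k+ℓ=n} 1/((k+2)²(ℓ+2)²) ≤ C₁/(n+4)². -/

import Mathlib

lemma sum_inv_sq_le (m : ℕ) :
    ∑ k ∈ Finset.range m, (1:ℝ)/((k:ℝ)+2)^2 ≤ 1 - 1/((m:ℝ)+1) := by
  induction m with
  | zero => simp
  | succ m ih =>
    rw [Finset.sum_range_succ]
    have h1 : (0:ℝ) < (m:ℝ)+1 := by positivity
    have h2 : (0:ℝ) < (m:ℝ)+2 := by positivity
    have key : (1:ℝ)/((m:ℝ)+2)^2 ≤ 1/((m:ℝ)+1) - 1/((m:ℝ)+2) := by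
      rw [div_sub_div _ _ (ne_of_gt h1) (ne_of_gt h2),
        div_le_div_iff₀ (by positivity) (by positivity)]
      nlinarith
    push_cast
    have : ((m:ℝ)+1+1) = (m:ℝ)+2 := by ring
    rw [this]
    linarith

theorem stmt_7 :
    ∃ C₁ > (0:ℝ), ∀ n : ℕ,
      ∑ p ∈ Finset.HasAntidiagonal.antidiagonal n, (1:ℝ) / ((p.1 + 2) ^ 2 * (p.2 + 2) ^ 2)
        ≤ C₁ / (n + 4) ^ 2 := by
  refine ⟨4, by norm_num, fun n => ?_⟩
  have hstep : ∑ p ∈ Finset.HasAntidiagonal.antidiagonal n, (1:ℝ) / ((p.1 + 2) ^ 2 * (p.2 + 2) ^ 2)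
      ≤ ∑ p ∈ Finset.HasAntidiagonal.antidiagonal n,
        (2/((n:ℝ)+4)^2) * (1/((p.1:ℝ)+2)^2 + 1/((p.2:ℝ)+2)^2) := by
    apply Finset.sum_le_sum
    intro p hp
    have hpn : p.1 + p.2 = n := Finset.HasAntidiagonal.mem_antidiagonal.mp hp
    set a : ℝ := (p.1:ℝ) + 2 with ha
    set b : ℝ := (p.2:ℝ) + 2 with hb
    have hab : a + b = (n:ℝ) + 4 := by
      rw [ha, hb]; push_cast [← hpn]; ring
    have hapos : 0 < a := by positivity
    have hbpos : 0 < b := by positivity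
    rw [← hab]
    rw [div_add_div _ _ (by positivity) (by positivity), div_mul_div_comm,
      div_le_div_iff₀ (by positivity) (by positivity)]
    nlinarith [sq_nonneg (a - b), sq_nonneg (a*b), sq_nonneg (a*b*(a-b)), mul_pos hapos hbpos]
  refine hstep.trans ?_
  rw [← Finset.mul_sum, Finset.sum_add_distrib]
  have h1 : ∑ p ∈ Finset.HasAntidiagonal.antidiagonal n, (1:ℝ)/((p.1:ℝ)+2)^2 ≤ 1 := by
    rw [Finset.Nat.sum_antidiagonal_eq_sum_range_succ_mk]
    have h := sum_inv_sq_le (n+1)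
    push_cast at h
    have hpos : (0:ℝ) < 1/((n:ℝ)+1+1) := by positivity
    simp only []
    linarith
  have h2 : ∑ p ∈ Finset.HasAntidiagonal.antidiagonal n, (1:ℝ)/((p.2:ℝ)+2)^2 ≤ 1 := by
    have hswap : ∑ p ∈ Finset.HasAntidiagonal.antidiagonal n, (1:ℝ)/((p.2:ℝ)+2)^2
        = ∑ p ∈ Finset.HasAntidiagonal.antidiagonal n, (1:ℝ)/((p.1:ℝ)+2)^2 := by
      nth_rewrite 1 [← Finset.HasAntidiagonal.map_swap_antidiagonal (n := n)]
      rw [Finset.sum_map]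
      simp [Prod.swap]
    rw [hswap]; exact h1
  have hn4 : (0:ℝ) < ((n:ℝ)+4)^2 := by positivity
  calc (2/((n:ℝ)+4)^2) * (∑ p ∈ Finset.HasAntidiagonal.antidiagonal n, (1:ℝ)/((p.1:ℝ)+2)^2
        + ∑ p ∈ Finset.HasAntidiagonal.antidiagonal n, (1:ℝ)/((p.2:ℝ)+2)^2)
      ≤ (2/((n:ℝ)+4)^2) * 2 := by
        apply mul_le_mul_of_nonneg_left (by linarith) (by positivity)
    _ = 4 / ((n:ℝ)+4)^2 := by ring
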